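/- Let ρ be a standard barrier function and let (σ_k^{(1)}), (σ_k^{(2)}) be sequences of positive reals with σ_k^{(1)} → 0, σ_k^{(2)} → 0 and ρ(−σ_k^{(2)}; σ_k^{(1)}) → 0 as k → ∞; set P_k(ω) = ρ(ω − σ_k^{(2)}; σ_k^{(1)}) (the modified barrier family). Then: (i) for every ω ≤ 0, P_k(ω) → 0 as k → ∞; and (ii) for every real sequence (ω_k), if lim sup_{k→∞} P_k(ω_k) < +∞ then lim sup_{k→∞} ω_k ≤ 0. -/
import Mathlib


open Filter Topology

theorem modified_barrier_family_properties
    -- `ρ : ℝ × (0,∞) → [0,+∞]` is a standard barrier function: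
    (ρ : ℝ → ℝ → EReal)
    (hnn : ∀ ω : ℝ, ∀ σ : ℝ, 0 < σ → 0 ≤ ρ ω σ)
    (hmono : ∀ σ : ℝ, 0 < σ → Monotone fun ω => ρ ω σ)
    (hzero : ∀ ω : ℝ, ω < 0 → Tendsto (fun σ => ρ ω σ) (𝓝[>] (0 : ℝ)) (𝓝 0))
    (htop : ∀ σ : ℝ, 0 < σ → ∀ ω : ℝ, 0 ≤ ω → ρ ω σ = ⊤)
    -- parameter sequences:
    (σ₁ σ₂ : ℕ → ℝ) (hσ₁pos : ∀ k, 0 < σ₁ k) (hσ₂pos : ∀ k, 0 < σ₂ k)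
    (hσ₁0 : Tendsto σ₁ atTop (𝓝 0)) (hσ₂0 : Tendsto σ₂ atTop (𝓝 0))
    (hshift : Tendsto (fun k => ρ (-σ₂ k) (σ₁ k)) atTop (𝓝 0)) :
    -- (i): for every ω ≤ 0, P_k(ω) = ρ(ω − σ₂ k; σ₁ k) → 0
    (∀ ω : ℝ, ω ≤ 0 →
      Tendsto (fun k => ρ (ω - σ₂ k) (σ₁ k)) atTop (𝓝 0)) ∧
    -- (ii): limsup P_k(ω_k) < +∞ implies limsup ω_k ≤ 0
    (∀ ω : ℕ → ℝ,
      limsup (fun k => ρ (ω k - σ₂ k) (σ₁ k)) atTop < ⊤ →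
      limsup (fun k => ((ω k : ℝ) : EReal)) atTop ≤ 0) := by

  constructor
  · intro ω hω
    refine tendsto_of_tendsto_of_tendsto_of_le_of_le tendsto_const_nhds hshift
      (fun k => hnn _ _ (hσ₁pos k)) (fun k => hmono (σ₁ k) (hσ₁pos k) ?_)
    linarith
  · intro ω hlim
    by_contra h
    push_neg at h
    obtain ⟨c, hc0, hclt⟩ := exists_between h
    have hcT : c ≠ ⊤ := by
      intro hc
      rw [hc] at hclt
      exact (lt_irrefl _ (hclt.trans_le le_top)).elim
    have hcB : c ≠ ⊥ := fun hc => by simp [hc] at hc0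
    set r := c.toReal with hr
    have hcr : c = (r : EReal) := (EReal.coe_toReal hcT hcB).symm
    have hrpos : 0 < r := by
      have := hc0
      rw [hcr] at this
      exact_mod_cast this
    have hfreq : ∃ᶠ k in atTop, c < ((ω k : ℝ) : EReal) :=
      frequently_lt_of_lt_limsup (by isBoundedDefault) hclt
    have hev : ∀ᶠ k in atTop, σ₂ k < r := hσ₂0.eventually (gt_mem_nhds hrpos)
    have hfreq2 : ∃ᶠ k in atTop, ρ (ω k - σ₂ k) (σ₁ k) = ⊤ := by
      refine (hfreq.and_eventually hev).mono ?_
      rintro k ⟨hk1, hk2⟩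
      rw [hcr] at hk1
      have : r < ω k := by exact_mod_cast hk1
      exact htop (σ₁ k) (hσ₁pos k) _ (by linarith)
    have : (⊤ : EReal) ≤ limsup (fun k => ρ (ω k - σ₂ k) (σ₁ k)) atTop :=
      le_limsup_of_frequently_le (hfreq2.mono fun k hk => hk.ge) (by isBoundedDefault)
    exact absurd (lt_of_le_of_lt this hlim) (lt_irrefl _)
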